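/- If a linear map L : ℝ^{q×q} → ℝ^d satisfies δ₁(L) < 1 (restricted isometry on rank-one matrices), then for every X ∈ ℝ^{q×q} with ‖X‖_F ≤ 1, the spectral norm of L'L(X) satisfies ‖L'L(X)‖₂ ≤ √(2(1+δ₁(L)))·‖L‖₂, where ‖L‖₂ is the operator norm of L from Frobenius norm to Euclidean norm. -/

import Mathlib

open Matrix Finset

/-- If `L : ℝ^{q×q} → ℝ^d` satisfies the restricted isometry condition on rank-one matrices with
constant `δ₁ < 1`, then for every `X` with `‖X‖_F ≤ 1`, the spectral norm of `L'L(X)` is at most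
`√(2(1+δ₁)) ‖L‖₂`, where `L'` is the adjoint of `L` (with respect to the trace inner product on
matrices and the Euclidean inner product on `ℝ^d`) and `‖L‖₂` is the operator norm of `L` from
the Frobenius norm to the Euclidean norm (represented by any upper bound `C`). -/
theorem spectral_norm_adjoint_comp_le (q d : ℕ) (δ C : ℝ)
    (hδ0 : 0 ≤ δ) (hδ1 : δ < 1) (hC : 0 ≤ C)
    (L : Matrix (Fin q) (Fin q) ℝ →ₗ[ℝ] (Fin d → ℝ))
    (Ladj : (Fin d → ℝ) →ₗ[ℝ] Matrix (Fin q) (Fin q) ℝ)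
    (hadj : ∀ (y : Fin d → ℝ) (Z : Matrix (Fin q) (Fin q) ℝ),
      Matrix.trace ((Ladj y)ᵀ * Z) = ∑ i, y i * L Z i)
    (hRIP : ∀ X : Matrix (Fin q) (Fin q) ℝ, X.rank ≤ 1 →
      (1 - δ) * Matrix.trace (Xᵀ * X) ≤ ∑ i, (L X i) ^ 2 ∧
        ∑ i, (L X i) ^ 2 ≤ (1 + δ) * Matrix.trace (Xᵀ * X))
    (hCnorm : ∀ X : Matrix (Fin q) (Fin q) ℝ, ∑ i, (L X i) ^ 2 ≤ C ^ 2 * Matrix.trace (Xᵀ * X)) :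
    ∀ X : Matrix (Fin q) (Fin q) ℝ, Matrix.trace (Xᵀ * X) ≤ 1 →
      ∀ u v : Fin q → ℝ, (∑ a, (u a) ^ 2 = 1) → (∑ b, (v b) ^ 2 = 1) →
        u ⬝ᵥ ((Ladj (L X)) *ᵥ v) ≤ Real.sqrt (2 * (1 + δ)) * C := by
  intro X hX u v hu hv
  set Z : Matrix (Fin q) (Fin q) ℝ := Matrix.vecMulVec u v with hZ
  have hZrank : Z.rank ≤ 1 := by
    rw [hZ, Matrix.vecMulVec_eq (Fin 1)]
    refine le_trans (Matrix.rank_mul_le_left _ _) ?_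
    exact le_trans (Matrix.rank_le_card_width (R := ℝ)
      (Matrix.replicateCol (Fin 1) u)) (by simp)
  have hZtr : Matrix.trace (Zᵀ * Z) = 1 := by
    have : Matrix.trace (Zᵀ * Z) = (∑ b, (v b) ^ 2) * (∑ a, (u a) ^ 2) := by
      simp only [Matrix.trace, Matrix.diag, Matrix.mul_apply, Matrix.transpose_apply,
        hZ, Matrix.vecMulVec_apply, Finset.sum_mul]
      congr 1; ext b
      rw [Finset.mul_sum]
      congr 1; ext a
      ring
    rw [this, hu, hv, one_mul]
  have key : u ⬝ᵥ ((Ladj (L X)) *ᵥ v) = ∑ i, L X i * L Z i := by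
    rw [← hadj (L X) Z]
    simp only [Matrix.trace, Matrix.diag, Matrix.mul_apply, Matrix.transpose_apply,
      dotProduct, Matrix.mulVec, hZ, Matrix.vecMulVec_apply]
    rw [Finset.sum_comm]
    congr 1; ext a
    rw [Finset.mul_sum]
    congr 1; ext b
    ring
  have hLX : ∑ i, (L X i) ^ 2 ≤ C ^ 2 := by
    calc ∑ i, (L X i) ^ 2 ≤ C ^ 2 * Matrix.trace (Xᵀ * X) := hCnorm X
      _ ≤ C ^ 2 * 1 := by
          apply mul_le_mul_of_nonneg_left hX (sq_nonneg C)
      _ = C ^ 2 := mul_one _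
  have hLZ : ∑ i, (L Z i) ^ 2 ≤ 1 + δ := by
    have := (hRIP Z hZrank).2
    rwa [hZtr, mul_one] at this
  have cs : (∑ i, L X i * L Z i) ^ 2 ≤ (∑ i, (L X i) ^ 2) * (∑ i, (L Z i) ^ 2) :=
    Finset.sum_mul_sq_le_sq_mul_sq _ _ _
  have hsum2 : (∑ i, L X i * L Z i) ^ 2 ≤ (2 * (1 + δ)) * C ^ 2 := by
    have h1 : (∑ i, (L X i) ^ 2) * (∑ i, (L Z i) ^ 2) ≤ C ^ 2 * (1 + δ) := by
      apply mul_le_mul hLX hLZ (Finset.sum_nonneg fun i _ => sq_nonneg _) (sq_nonneg C)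
    nlinarith [sq_nonneg C]
  rw [key]
  have hrhs : (0:ℝ) ≤ Real.sqrt (2 * (1 + δ)) * C :=
    mul_nonneg (Real.sqrt_nonneg _) hC
  rcases le_or_gt (∑ i, L X i * L Z i) 0 with h | h
  · linarith
  · have := Real.sqrt_le_sqrt hsum2
    rwa [Real.sqrt_sq h.le, Real.sqrt_mul (by linarith) (C ^ 2), Real.sqrt_sq hC] at this
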